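/- Let m, n ≥ 1 and let (A, b, ∘, c, Q, l, u) be an LCQP instance with Q symmetric positive semidefinite whose set S of optimal solutions is nonempty, and let x* be the unique optimal solution of minimal Euclidean norm. Suppose σ is a permutation of {1,…,n} and τ is a permutation of {1,…,m} preserving the problem data, i.e., c_{σ(j)} = c_j, l_{σ(j)} = l_j, u_{σ(j)} = u_j for all j, Q_{σ(j)σ(j')} = Q_{jj'} for all j, j', and A_{τ(i)σ(j)} = A_{ij}, b_{τ(i)} = b_i, ∘_{τ(i)} = ∘_i for all i, j. Then x*_{σ(j)} = x*_j for every j ∈ {1,…,n}. -/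

import Mathlib

open Matrix

/-- Comparison symbols `≤`, `=`, `≥` for linear constraints. -/
inductive CmpOp : Type
  | le : CmpOp
  | eq : CmpOp
  | ge : CmpOp

/-- `CmpOp.holds o a b` means `a ∘ b` where `∘` is the comparison symbol `o`. -/
def CmpOp.holds : CmpOp → ℝ → ℝ → Prop
  | .le, a, b => a ≤ b
  | .eq, a, b => a = b
  | .ge, a, b => a ≥ b

/-- Feasibility of `x` for linear constraints `Ax ∘ b`, `l ≤ x ≤ u`, where
`l ∈ (ℝ∪{−∞})^n` and `u ∈ (ℝ∪{+∞})^n` and the bound inequalities are in the extended reals. -/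
def LinFeasible {m n : ℕ} (A : Matrix (Fin m) (Fin n) ℝ) (b : Fin m → ℝ)
    (o : Fin m → CmpOp) (l : Fin n → WithBot ℝ) (u : Fin n → WithTop ℝ)
    (x : Fin n → ℝ) : Prop :=
  (∀ i, (o i).holds (A.mulVec x i) (b i)) ∧
    (∀ j, l j ≤ (x j : WithBot ℝ)) ∧ (∀ j, (x j : WithTop ℝ) ≤ u j)

/-- The Euclidean norm on `ℝ^n`. -/
noncomputable def euclNorm {n : ℕ} (x : Fin n → ℝ) : ℝ := Real.sqrt (∑ j, (x j) ^ 2)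

theorem Equiv.Perm.apply_inv_self {α : Type*} (f : Equiv.Perm α) (x : α) : f (f⁻¹ x) = x :=
  Equiv.apply_symm_apply f x

theorem Equiv.Perm.inv_apply_self {α : Type*} (f : Equiv.Perm α) (x : α) : f⁻¹ (f x) = x :=
  Equiv.symm_apply_apply f x

/-- If the LCQP data `(A, b, ∘, c, Q, l, u)` (with `Q` symmetric positive semidefinite and
nonempty optimal solution set `S`) is preserved by a pair of permutations `σ` of the variables
and `τ` of the constraints, then the unique minimal-Euclidean-norm optimal solution `x*`
satisfies `x*_{σ(j)} = x*_j` for every `j`. -/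
theorem min_norm_solution_invariant_under_symmetry {m n : ℕ} (hm : 1 ≤ m) (hn : 1 ≤ n)
    (A : Matrix (Fin m) (Fin n) ℝ) (b : Fin m → ℝ) (o : Fin m → CmpOp)
    (c : Fin n → ℝ) (Q : Matrix (Fin n) (Fin n) ℝ)
    (l : Fin n → WithBot ℝ) (u : Fin n → WithTop ℝ)
    (hQ : Q.PosSemidef)
    (S : Set (Fin n → ℝ))
    (hS : S = {x | LinFeasible A b o l u x ∧
      ∀ y, LinFeasible A b o l u y → (1 / 2) * (x ⬝ᵥ Q.mulVec x) + c ⬝ᵥ x ≤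
        (1 / 2) * (y ⬝ᵥ Q.mulVec y) + c ⬝ᵥ y})
    (hne : S.Nonempty)
    (σ : Equiv.Perm (Fin n)) (τ : Equiv.Perm (Fin m))
    (hcσ : ∀ j, c (σ j) = c j) (hlσ : ∀ j, l (σ j) = l j) (huσ : ∀ j, u (σ j) = u j)
    (hQσ : ∀ j j', Q (σ j) (σ j') = Q j j')
    (hAστ : ∀ i j, A (τ i) (σ j) = A i j)
    (hbτ : ∀ i, b (τ i) = b i) (hoτ : ∀ i, o (τ i) = o i)
    (xstar : Fin n → ℝ)
    (hxstar : xstar ∈ S ∧ ∀ x ∈ S, euclNorm xstar ≤ euclNorm x) :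
    ∀ j, xstar (σ j) = xstar j := by
  set f : (Fin n → ℝ) → ℝ := fun x => (1 / 2) * (x ⬝ᵥ Q.mulVec x) + c ⬝ᵥ x with hf
  obtain ⟨hxS, hxmin⟩ := hxstar
  set y : Fin n → ℝ := fun j => xstar (σ⁻¹ j) with hy
  have hl' : ∀ j, l j = l (σ⁻¹ j) := by
    intro j; have := hlσ (σ⁻¹ j); rwa [Equiv.Perm.apply_inv_self] at this
  have hu' : ∀ j, u j = u (σ⁻¹ j) := by
    intro j; have := huσ (σ⁻¹ j); rwa [Equiv.Perm.apply_inv_self] at this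
  -- feasibility is preserved
  have hfeas : ∀ x : Fin n → ℝ, LinFeasible A b o l u x →
      LinFeasible A b o l u (fun j => x (σ⁻¹ j)) := by
    rintro x ⟨h1, h2, h3⟩
    refine ⟨?_, ?_, ?_⟩
    · intro i
      have hmv : A.mulVec (fun j => x (σ⁻¹ j)) i = A.mulVec x (τ⁻¹ i) := by
        conv_lhs => rw [← Equiv.Perm.apply_inv_self τ i]
        show ∑ j, A (τ (τ⁻¹ i)) j * x (σ⁻¹ j) = ∑ j, A (τ⁻¹ i) j * x j
        rw [← Equiv.sum_comp σ (fun j => A (τ (τ⁻¹ i)) j * x (σ⁻¹ j))]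
        refine Finset.sum_congr rfl fun k _ => ?_
        rw [hAστ, Equiv.Perm.inv_apply_self]
      have hoi : o i = o (τ⁻¹ i) := by
        have := hoτ (τ⁻¹ i); rwa [Equiv.Perm.apply_inv_self] at this
      have hbi : b i = b (τ⁻¹ i) := by
        have := hbτ (τ⁻¹ i); rwa [Equiv.Perm.apply_inv_self] at this
      rw [hmv, hoi, hbi]; exact h1 _
    · intro j; rw [hl']; exact h2 _
    · intro j; rw [hu']; exact h3 _
  -- objective value is preserved
  have hobj : ∀ x : Fin n → ℝ, f (fun j => x (σ⁻¹ j)) = f x := by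
    intro x
    have hq : (fun j => x (σ⁻¹ j)) ⬝ᵥ Q.mulVec (fun j => x (σ⁻¹ j)) = x ⬝ᵥ Q.mulVec x := by
      show ∑ j, x (σ⁻¹ j) * ∑ k, Q j k * x (σ⁻¹ k) = ∑ j, x j * ∑ k, Q j k * x k
      rw [← Equiv.sum_comp σ (fun j => x (σ⁻¹ j) * ∑ k, Q j k * x (σ⁻¹ k))]
      refine Finset.sum_congr rfl fun j _ => ?_
      rw [Equiv.Perm.inv_apply_self]
      congr 1
      rw [← Equiv.sum_comp σ (fun k => Q (σ j) k * x (σ⁻¹ k))]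
      refine Finset.sum_congr rfl fun k _ => ?_
      rw [hQσ, Equiv.Perm.inv_apply_self]
    have hc2 : c ⬝ᵥ (fun j => x (σ⁻¹ j)) = c ⬝ᵥ x := by
      show ∑ j, c j * x (σ⁻¹ j) = ∑ j, c j * x j
      rw [← Equiv.sum_comp σ (fun j => c j * x (σ⁻¹ j))]
      refine Finset.sum_congr rfl fun j _ => ?_
      rw [hcσ, Equiv.Perm.inv_apply_self]
    simp only [hf, hq, hc2]
  -- sum of squares is preserved
  have hnorm : (∑ j, (y j) ^ 2) = ∑ j, (xstar j) ^ 2 := by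
    rw [← Equiv.sum_comp σ (fun j => (y j) ^ 2)]
    refine Finset.sum_congr rfl fun j _ => ?_
    simp [hy, Equiv.Perm.inv_apply_self]
  have hxS' := hS ▸ hxS
  obtain ⟨hxfeas, hxopt⟩ := hxS'
  have hyS : y ∈ S := by
    rw [hS]
    refine ⟨hfeas _ hxfeas, fun w hw => ?_⟩
    calc (1 / 2) * (y ⬝ᵥ Q.mulVec y) + c ⬝ᵥ y = f xstar := hobj xstar
      _ ≤ _ := hxopt w hw
  have hfy : f y = f xstar := hobj xstar
  set z : Fin n → ℝ := fun j => (xstar j + y j) / 2 with hz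
  set d : Fin n → ℝ := fun j => (xstar j - y j) / 2 with hd
  have hyfeas : LinFeasible A b o l u y := hfeas _ hxfeas
  have hzfeas : LinFeasible A b o l u z := by
    obtain ⟨hx1, hx2, hx3⟩ := hxfeas
    obtain ⟨hy1, hy2, hy3⟩ := hyfeas
    have hmv : ∀ i, A.mulVec z i = (A.mulVec xstar i + A.mulVec y i) / 2 := by
      intro i
      show ∑ j, A i j * ((xstar j + y j) / 2) = _
      rw [Matrix.mulVec, Matrix.mulVec, dotProduct, dotProduct,
        ← Finset.sum_add_distrib, Finset.sum_div]
      refine Finset.sum_congr rfl fun j _ => by ring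
    refine ⟨fun i => ?_, fun j => ?_, fun j => ?_⟩
    · rw [hmv]
      have h1 := hx1 i; have h2 := hy1 i
      cases ho : o i <;> rw [ho] at h1 h2 <;>
        simp only [CmpOp.holds, ge_iff_le] at h1 h2 ⊢ <;> [linarith; linarith; linarith]
    · have h1 := hx2 j; have h2 := hy2 j
      cases hlj : l j with
      | bot => exact bot_le
      | coe a =>
        rw [hlj] at h1 h2
        have ha1 : a ≤ xstar j := by exact_mod_cast h1
        have ha2 : a ≤ y j := by exact_mod_cast h2
        exact_mod_cast (by linarith : a ≤ (xstar j + y j) / 2)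
    · have h1 := hx3 j; have h2 := hy3 j
      cases huj : u j with
      | top => exact le_top
      | coe a =>
        rw [huj] at h1 h2
        have ha1 : xstar j ≤ a := by exact_mod_cast h1
        have ha2 : y j ≤ a := by exact_mod_cast h2
        exact_mod_cast (by linarith : (xstar j + y j) / 2 ≤ a)
  -- quadratic identity
  have edot : ∀ w : Fin n → ℝ, w ⬝ᵥ Q.mulVec w = ∑ j, ∑ k, w j * (Q j k * w k) := by
    intro w
    show ∑ j, w j * ∑ k, Q j k * w k = _
    exact Finset.sum_congr rfl fun j _ => Finset.mul_sum _ _ _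
  have hqid : z ⬝ᵥ Q.mulVec z =
      (xstar ⬝ᵥ Q.mulVec xstar + y ⬝ᵥ Q.mulVec y) / 2 - d ⬝ᵥ Q.mulVec d := by
    rw [edot, edot, edot, edot, ← Finset.sum_add_distrib, Finset.sum_div,
      ← Finset.sum_sub_distrib]
    refine Finset.sum_congr rfl fun j _ => ?_
    rw [← Finset.sum_add_distrib, Finset.sum_div, ← Finset.sum_sub_distrib]
    refine Finset.sum_congr rfl fun k _ => ?_
    simp only [hz, hd]; ring
  have hcid : c ⬝ᵥ z = (c ⬝ᵥ xstar + c ⬝ᵥ y) / 2 := by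
    show ∑ j, c j * z j = ((∑ j, c j * xstar j) + ∑ j, c j * y j) / 2
    rw [← Finset.sum_add_distrib, Finset.sum_div]
    refine Finset.sum_congr rfl fun j _ => ?_
    simp only [hz]; ring
  have hdQd : 0 ≤ d ⬝ᵥ Q.mulVec d := by simpa using hQ.dotProduct_mulVec_nonneg d
  have hfz : f z ≤ f xstar := by
    simp only [hf] at hfy ⊢
    rw [hqid, hcid]
    nlinarith [hdQd]
  have hzS : z ∈ S := by
    rw [hS]
    exact ⟨hzfeas, fun w hw => le_trans hfz (hxopt w hw)⟩
  have h0 : (∑ j, ((y j) ^ 2 - (xstar j) ^ 2)) = 0 := by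
    rw [Finset.sum_sub_distrib, hnorm]; ring
  have hNd : (∑ j, (z j) ^ 2) = (∑ j, (xstar j) ^ 2) - ∑ j, (d j) ^ 2 := by
    calc (∑ j, (z j) ^ 2)
        = ∑ j, ((xstar j) ^ 2 - (d j) ^ 2 + ((y j) ^ 2 - (xstar j) ^ 2) / 2) :=
          Finset.sum_congr rfl fun j _ => by simp only [hz, hd]; ring
      _ = (∑ j, (xstar j) ^ 2) - ∑ j, (d j) ^ 2 := by
          rw [Finset.sum_add_distrib, Finset.sum_sub_distrib, ← Finset.sum_div, h0]; ring
  have hNz_nonneg : 0 ≤ ∑ j, (z j) ^ 2 := Finset.sum_nonneg fun j _ => sq_nonneg _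
  have hNx_nonneg : 0 ≤ ∑ j, (xstar j) ^ 2 := Finset.sum_nonneg fun j _ => sq_nonneg _
  have hNd_nonneg : 0 ≤ ∑ j, (d j) ^ 2 := Finset.sum_nonneg fun j _ => sq_nonneg _
  have hle : euclNorm xstar ≤ euclNorm z := hxmin z hzS
  have hge : euclNorm z ≤ euclNorm xstar := by
    unfold euclNorm
    apply Real.sqrt_le_sqrt
    rw [hNd]; linarith
  have heq : euclNorm z = euclNorm xstar := le_antisymm hge hle
  have hNeq : (∑ j, (z j) ^ 2) = ∑ j, (xstar j) ^ 2 :=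
    (Real.sqrt_inj hNz_nonneg hNx_nonneg).mp heq
  have hd0 : (∑ j, (d j) ^ 2) = 0 := by rw [hNd] at hNeq; linarith
  have hdj : ∀ j, d j = 0 := by
    intro j
    have h := (Finset.sum_eq_zero_iff_of_nonneg (fun j _ => sq_nonneg (d j))).mp hd0 j
      (Finset.mem_univ j)
    exact pow_eq_zero_iff (by norm_num) |>.mp h
  have hxy : ∀ j, xstar j = y j := by
    intro j
    have h := hdj j
    simp only [hd] at h
    linarith
  intro j
  have h := hxy (σ j)
  rw [hy] at h
  simpa [Equiv.Perm.inv_apply_self] using h
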